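/- Let (W,S) be a Coxeter system, J ⊆ S, W_J the standard parabolic subgroup generated by J, and w_J its longest element (W_J finite). For w ∈ W with ℓ(w w_J) = ℓ(w) + ℓ(w_J), if α is a positive root such that w_J w^{-1}(α) is positive, then y w^{-1}(α) is positive for every y ∈ W_J. -/

import Mathlib

open List
open scoped Classical

namespace CoxExchange
variable {B : Type*} {W : Type*} [Group W] {M : CoxeterMatrix B} (cs : CoxeterSystem M W)
local prefix:100 "s" => cs.simple
local prefix:100 "π" => cs.wordProd
local prefix:100 "ℓ" => cs.length
local prefix:100 "ris" => cs.rightInvSeq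
local prefix:100 "lis" => cs.leftInvSeq

theorem rightInvSeq_cons (i : B) (ω : List B) :
    ris (i :: ω) = ((π ω)⁻¹ * s i * π ω) :: ris ω := rfl

theorem ris_append (ω₁ ω₂ : List B) :
    ris (ω₁ ++ ω₂) = (ris ω₁).map (fun x => (π ω₂)⁻¹ * x * π ω₂) ++ ris ω₂ := by
  induction ω₁ with
  | nil => simp
  | cons i ω₁ ih =>
    rw [cons_append, rightInvSeq_cons, rightInvSeq_cons, ih, map_cons, cons_append]
    congr 1
    rw [cs.wordProd_append, mul_inv_rev]
    group

theorem lis_eq_map_ris (ω : List B) :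
    lis ω = (ris ω).map (fun x => (π ω) * x * (π ω)⁻¹) := by
  induction ω with
  | nil => simp
  | cons i ω ih =>
    rw [CoxeterSystem.leftInvSeq, rightInvSeq_cons, map_cons, ih, map_map]
    congr 1
    · rw [cs.wordProd_cons, mul_inv_rev, cs.inv_simple]
      group
      simp [cs.simple_sq]
    · apply map_congr_left
      intro x _
      simp only [Function.comp, MulAut.conj_apply, cs.wordProd_cons, mul_inv_rev, cs.inv_simple]
      group

/-- The sign-flipping permutation attached to a simple reflection. -/
noncomputable def sigma (i : B) : Equiv.Perm (W × ℤˣ) :=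
  Function.Involutive.toPerm
    (fun p => (s i * p.1 * s i, if p.1 = s i then -p.2 else p.2))
    (by
      rintro ⟨t, ε⟩
      have h1 : s i * (s i * t * s i) * s i = t := by
        group; simp [cs.simple_sq]
      have h2 : (s i * t * s i = s i) ↔ (t = s i) := by
        constructor
        · intro h
          have := congrArg (fun x => s i * x * s i) h
          simpa [h1, cs.simple_mul_simple_self, ← mul_assoc] using this
        · rintro rfl; simp [cs.simple_mul_simple_self]
      simp only [Prod.mk.injEq, h1, h2]
      refine ⟨trivial, ?_⟩
      by_cases h : t = s i <;> simp [h])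

theorem sigma_apply (i : B) (t : W) (ε : ℤˣ) :
    sigma cs i (t, ε) = (s i * t * s i, if t = s i then -ε else ε) := rfl

theorem prod_map_sigma_apply (ω : List B) (t : W) (ε : ℤˣ) :
    ((ω.map (sigma cs)).prod) (t, ε)
      = (π ω * t * (π ω)⁻¹, (-1 : ℤˣ) ^ ((ris ω).count t) * ε) := by
  induction ω with
  | nil => simp
  | cons i ω ih =>
    rw [map_cons, prod_cons, Equiv.Perm.mul_apply, ih, sigma_apply, rightInvSeq_cons,
      cs.wordProd_cons]
    have hcond : (π ω * t * (π ω)⁻¹ = s i) ↔ ((π ω)⁻¹ * s i * π ω = t) := by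
      constructor
      · intro h; rw [← h]; group
      · intro h; rw [← h]; group
    rw [count_cons]
    by_cases h : (π ω)⁻¹ * s i * π ω = t
    · rw [if_pos (hcond.mpr h), if_pos (by simp [h])]
      refine Prod.ext ?_ ?_
      · show s i * (π ω * t * (π ω)⁻¹) * s i = (s i * π ω) * t * (s i * π ω)⁻¹
        rw [mul_inv_rev, cs.inv_simple]
        group
      · show -((-1 : ℤˣ) ^ ((ris ω).count t) * ε) = (-1) ^ ((ris ω).count t + 1) * ε
        rw [pow_succ, mul_neg_one, neg_mul]
    · rw [if_neg (fun hc => h (hcond.mp hc)), if_neg (by simpa using h)]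
      refine Prod.ext ?_ ?_
      · show s i * (π ω * t * (π ω)⁻¹) * s i = (s i * π ω) * t * (s i * π ω)⁻¹
        rw [mul_inv_rev, cs.inv_simple]
        group
      · simp

section Dihedral

variable (i j : B)

theorem simple_mul_pow (a : ℕ) :
    s j * (s i * s j) ^ a = ((s i * s j)⁻¹) ^ a * s j := by
  induction a with
  | zero => simp
  | succ a ih =>
    have hbase : s j * (s i * s j) = (s i * s j)⁻¹ * s j := by
      rw [mul_inv_rev, cs.inv_simple, cs.inv_simple]
      group
    calc s j * (s i * s j) ^ (a + 1)
        = (s j * (s i * s j)) * (s i * s j) ^ a := by rw [pow_succ', ← mul_assoc]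
      _ = (s i * s j)⁻¹ * (s j * (s i * s j) ^ a) := by rw [hbase, mul_assoc]
      _ = ((s i * s j)⁻¹) ^ (a + 1) * s j := by rw [ih, pow_succ', mul_assoc]

theorem alt_conj (n : ℕ) :
    (π (CoxeterSystem.alternatingWord i j n))⁻¹ * s (if Even n then j else i)
      * π (CoxeterSystem.alternatingWord i j n) = s j * (s i * s j) ^ n := by
  rw [cs.prod_alternatingWord_eq_mul_pow]
  rcases Nat.even_or_odd n with he | ho
  · obtain ⟨a, rfl⟩ := he
    have h2 : (a + a) / 2 = a := by omega
    rw [if_pos ⟨a, rfl⟩, if_pos ⟨a, rfl⟩, h2, one_mul]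
    rw [show s j * (s i * s j) ^ (a + a) = (s j * (s i * s j) ^ a) * (s i * s j) ^ a by
      rw [pow_add]; group]
    rw [simple_mul_pow, inv_pow]
  · obtain ⟨a, rfl⟩ := ho
    have h2 : (2 * a + 1) / 2 = a := by omega
    have hne : ¬ Even (2 * a + 1) := by simp [parity_simps]
    rw [if_neg hne, if_neg hne, h2]
    have hsj : (s j)⁻¹ = s j := (cs.inv_simple j).symm ▸ rfl
    have hconj : s j * s i * s j = (s i * s j)⁻¹ * s j := by
      rw [mul_inv_rev, cs.inv_simple, cs.inv_simple]
    calc (s j * (s i * s j) ^ a)⁻¹ * s i * (s j * (s i * s j) ^ a)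
        = ((s i * s j)⁻¹) ^ a * (s j * s i * s j) * (s i * s j) ^ a := by
          rw [mul_inv_rev, cs.inv_simple, inv_pow]; group
      _ = ((s i * s j)⁻¹) ^ a * ((s i * s j)⁻¹ * s j) * (s i * s j) ^ a := by rw [hconj]
      _ = ((s i * s j)⁻¹) ^ (a + 1) * (s j * (s i * s j) ^ a) := by rw [pow_succ]; group
      _ = ((s i * s j)⁻¹) ^ (a + 1) * (((s i * s j)⁻¹) ^ a * s j) := by
          rw [simple_mul_pow]
      _ = ((s i * s j)⁻¹) ^ (2 * a + 1) * s j := by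
          rw [← mul_assoc, ← pow_add, show a + 1 + a = 2 * a + 1 by omega]
      _ = s j * (s i * s j) ^ (2 * a + 1) := (simple_mul_pow cs i j _).symm

theorem ris_alt (n : ℕ) :
    ris (CoxeterSystem.alternatingWord i j n)
      = (List.range n).map (fun k => s j * (s i * s j) ^ (n - 1 - k)) := by
  induction n with
  | zero => simp [CoxeterSystem.alternatingWord]
  | succ n ih =>
    rw [CoxeterSystem.alternatingWord_succ', rightInvSeq_cons, ih, List.range_succ_eq_map,
      map_cons, map_map]
    congr 1
    · have := alt_conj cs i j n
      simpa using this
    · apply map_congr_left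
      intro k _
      simp only [Function.comp]
      congr 2
      omega

theorem count_ris_alt_even (t : W) :
    Even ((ris (CoxeterSystem.alternatingWord i j (2 * M i j))).count t) := by
  rw [ris_alt]
  have hsplit : List.range (2 * M i j) = List.range (M i j) ++ (List.range (M i j)).map
      (fun k => M i j + k) := by
    rw [two_mul, List.range_add]
  rw [hsplit, map_append, map_map]
  have heq : ∀ f : ℕ → W, (f = fun k => s j * (s i * s j) ^ (2 * M i j - 1 - k)) →
      (List.range (M i j)).map ((fun k => s j * (s i * s j) ^ (2 * M i j - 1 - k)) ∘
        (fun k => M i j + k))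
      = (List.range (M i j)).map (fun k => s j * (s i * s j) ^ (2 * M i j - 1 - k)) := by
    intro f _
    apply map_congr_left
    intro k hk
    rw [mem_range] at hk
    simp only [Function.comp]
    have h1 : 2 * M i j - 1 - (M i j + k) = M i j - 1 - k := by omega
    have h2 : 2 * M i j - 1 - k = (M i j - 1 - k) + M i j := by omega
    rw [h1, h2, pow_add, cs.simple_mul_simple_pow, mul_one]
  rw [heq _ rfl, count_append]
  exact ⟨_, rfl⟩

theorem sigma_pow_alt (m : ℕ) :
    (sigma cs i * sigma cs j) ^ m
      = ((CoxeterSystem.alternatingWord i j (2 * m)).map (sigma cs)).prod := by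
  induction m with
  | zero => simp [CoxeterSystem.alternatingWord]
  | succ m ih =>
    have halt : CoxeterSystem.alternatingWord i j (2 * (m + 1))
        = i :: j :: CoxeterSystem.alternatingWord i j (2 * m) := by
      rw [show 2 * (m + 1) = (2 * m + 1) + 1 by omega, CoxeterSystem.alternatingWord_succ',
        CoxeterSystem.alternatingWord_succ']
      simp [parity_simps]
    rw [halt, map_cons, map_cons, prod_cons, prod_cons, ← ih, pow_succ', mul_assoc]

theorem sigma_liftable : M.IsLiftable (fun i => sigma cs i) := by
  intro i j
  show (sigma cs i * sigma cs j) ^ M i j = 1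
  apply Equiv.ext
  rintro ⟨t, ε⟩
  have hπ : π (CoxeterSystem.alternatingWord i j (2 * M i j)) = 1 := by
    rw [cs.prod_alternatingWord_eq_mul_pow, if_pos (even_two_mul _),
      show 2 * M i j / 2 = M i j by omega, one_mul, cs.simple_mul_simple_pow]
  rw [sigma_pow_alt, prod_map_sigma_apply, hπ, (count_ris_alt_even cs i j t).neg_one_pow]
  simp

end Dihedral

/-- The sign permutation representation. -/
noncomputable def eta : W →* Equiv.Perm (W × ℤˣ) :=
  cs.lift ⟨fun i => sigma cs i, sigma_liftable cs⟩

theorem eta_wordProd (ω : List B) : eta cs (π ω) = (ω.map (sigma cs)).prod := by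
  induction ω with
  | nil => simp [cs.wordProd_nil]
  | cons i ω ih =>
    rw [cs.wordProd_cons, map_mul, ih, map_cons, prod_cons]
    congr 1
    exact cs.lift_apply_simple (sigma_liftable cs) i

theorem count_parity {ω₁ ω₂ : List B} (h : π ω₁ = π ω₂) (t : W) :
    ((-1 : ℤˣ) ^ ((ris ω₁).count t)) = ((-1 : ℤˣ) ^ ((ris ω₂).count t)) := by
  have h1 := prod_map_sigma_apply cs ω₁ t 1
  have h2 := prod_map_sigma_apply cs ω₂ t 1
  rw [← eta_wordProd] at h1
  rw [← eta_wordProd, ← h] at h2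
  rw [h1] at h2
  have := congrArg Prod.snd h2
  simpa using this

theorem odd_iff_of_neg_one_pow_eq {a b : ℕ} (h : ((-1 : ℤˣ) ^ a) = ((-1 : ℤˣ) ^ b)) :
    (Odd a ↔ Odd b) := by
  rcases Nat.even_or_odd a with ha | ha <;> rcases Nat.even_or_odd b with hb | hb
  · simp [Nat.not_odd_iff_even.2 ha, Nat.not_odd_iff_even.2 hb]
  · rw [ha.neg_one_pow, hb.neg_one_pow] at h
    exact absurd h (by decide)
  · rw [ha.neg_one_pow, hb.neg_one_pow] at h
    exact absurd h (by decide)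
  · simp [ha, hb]

theorem count_odd_iff {ω₁ ω₂ : List B} (h : π ω₁ = π ω₂) (t : W) :
    Odd ((ris ω₁).count t) ↔ Odd ((ris ω₂).count t) :=
  odd_iff_of_neg_one_pow_eq (count_parity cs h t)


theorem odd_count_refl {t : W} (ht : cs.IsReflection t) :
    ∃ ρ : List B, π ρ = t ∧ Odd ((ris ρ).count t) := by
  obtain ⟨v, i, rfl⟩ := ht
  obtain ⟨κ, rfl⟩ := cs.wordProd_surjective v
  refine ⟨κ ++ (i :: κ.reverse), ?_, ?_⟩
  · rw [cs.wordProd_append, cs.wordProd_cons, cs.wordProd_reverse, ← mul_assoc]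
  · rw [ris_append, count_append]
    have hπ2 : π (i :: κ.reverse) = s i * (π κ)⁻¹ := by
      rw [cs.wordProd_cons, cs.wordProd_reverse]
    have hf : Function.Injective
        (fun x : W => (π (i :: κ.reverse))⁻¹ * x * π (i :: κ.reverse)) := by
      intro a b hab
      simpa using hab
    have hfs : (fun x : W => (π (i :: κ.reverse))⁻¹ * x * π (i :: κ.reverse)) (s i)
        = π κ * s i * (π κ)⁻¹ := by
      rw [hπ2, mul_inv_rev, cs.inv_simple, inv_inv]
      group
      simp [cs.simple_sq]
    have h1 : ((ris κ).map
        (fun x : W => (π (i :: κ.reverse))⁻¹ * x * π (i :: κ.reverse))).count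
          (π κ * s i * (π κ)⁻¹) = (ris κ).count (s i) := by
      rw [← hfs]
      exact List.count_map_of_injective _ _ hf _
    have h2 : ris (i :: κ.reverse) = (π κ * s i * (π κ)⁻¹) :: (lis κ).reverse := by
      rw [rightInvSeq_cons, cs.wordProd_reverse, inv_inv, cs.rightInvSeq_reverse]
    have hg : Function.Injective (fun x : W => (π κ) * x * (π κ)⁻¹) := by
      intro a b hab
      simpa using hab
    have h3 : ((lis κ).reverse).count (π κ * s i * (π κ)⁻¹) = (ris κ).count (s i) := by
      rw [count_reverse, lis_eq_map_ris]
      exact List.count_map_of_injective _ _ hg _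
    rw [h1, h2, List.count_cons_self, h3]
    exact ⟨(ris κ).count (s i), by omega⟩

theorem isRightInversion_iff_odd_count {t w : W} (ht : cs.IsReflection t) {ω : List B}
    (hω : π ω = w) : cs.IsRightInversion w t ↔ Odd ((ris ω).count t) := by
  constructor
  · intro hinv
    by_contra hcount
    rw [Nat.not_odd_iff_even] at hcount
    obtain ⟨ρ, hρ, hρodd⟩ := odd_count_refl cs ht
    obtain ⟨δ, hδred, hδ⟩ := cs.exists_reduced_word' (w * t)
    have hπδ : π (ω ++ ρ) = π δ := by
      rw [cs.wordProd_append, hω, hρ, ← hδ]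
    have hcnt : Odd ((ris (ω ++ ρ)).count t) := by
      rw [ris_append, count_append]
      have hf : Function.Injective (fun x : W => (π ρ)⁻¹ * x * π ρ) := by
        intro a b hab; simpa using hab
      have h4 := List.count_map_of_injective (ris ω) (fun x : W => (π ρ)⁻¹ * x * π ρ) hf t
      have hft : (π ρ)⁻¹ * t * π ρ = t := by
        rw [hρ, ht.inv, mul_assoc, ht.mul_self, mul_one]
      simp only [hft] at h4
      rw [h4]
      exact hcount.add_odd hρodd
    rw [count_odd_iff cs hπδ] at hcnt
    have hmem : t ∈ ris δ := by
      by_contra hmem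
      rw [List.count_eq_zero_of_not_mem hmem] at hcnt
      simp at hcnt
    have := (cs.isRightInversion_of_mem_rightInvSeq hδred hmem).2
    rw [← hδ, mul_assoc, ht.mul_self, mul_one] at this
    exact Nat.lt_irrefl _ (this.trans hinv.2)
  · intro hcnt
    obtain ⟨δ, hδred, hδ⟩ := cs.exists_reduced_word' w
    rw [count_odd_iff cs (hω.trans hδ)] at hcnt
    have hmem : t ∈ ris δ := by
      by_contra hmem
      rw [List.count_eq_zero_of_not_mem hmem] at hcnt
      simp at hcnt
    have := cs.isRightInversion_of_mem_rightInvSeq hδred hmem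
    rw [hδ]
    exact this

theorem mem_ris_of_isRightInversion {t w : W} {ω : List B} (hred : cs.IsReduced ω)
    (hω : π ω = w) (hinv : cs.IsRightInversion w t) : t ∈ ris ω := by
  have := (isRightInversion_iff_odd_count cs hinv.1 hω).1 hinv
  by_contra hmem
  rw [List.count_eq_zero_of_not_mem hmem] at this
  simp at this


theorem deletion (ω : List B) (hnr : ¬ cs.IsReduced ω) :
    ∃ ω' : List B, ω'.length + 2 = ω.length ∧ π ω' = π ω ∧ ∀ i ∈ ω', i ∈ ω := by
  have hex : ∃ n, ¬ cs.IsReduced (ω.take n) := ⟨ω.length, by rwa [List.take_length]⟩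
  have hk' := Nat.find_spec hex
  have hk'le : Nat.find hex ≤ ω.length := Nat.find_min' hex (by rwa [List.take_length])
  have hk0 : Nat.find hex ≠ 0 := by
    intro h
    rw [h] at hk'
    exact hk' (by simp [CoxeterSystem.IsReduced])
  obtain ⟨k, hkk⟩ : ∃ k, Nat.find hex = k + 1 := ⟨Nat.find hex - 1, by omega⟩
  rw [hkk] at hk' hk'le
  have hred : cs.IsReduced (ω.take k) := by
    have := Nat.find_min hex (show k < Nat.find hex by omega)
    rwa [not_not] at this
  have hklen : k < ω.length := by omega
  set i := ω.get ⟨k, hklen⟩ with hi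
  have htake : ω.take (k+1) = ω.take k ++ [i] := by
    rw [List.take_succ]
    congr
    simp [List.getElem?_eq_getElem hklen]
    rfl
  have hπtake : π (ω.take (k+1)) = π (ω.take k) * s i := by
    rw [htake, cs.wordProd_append, cs.wordProd_singleton]
  have hlu : ℓ (π (ω.take k)) = k := by
    have := hred
    unfold CoxeterSystem.IsReduced at this
    rwa [List.length_take, min_eq_left (by omega)] at this
  have hlt : ℓ (π (ω.take k) * s i) < ℓ (π (ω.take k)) := by
    rcases cs.length_mul_simple (π (ω.take k)) i with h | h
    · exfalso
      apply hk'
      unfold CoxeterSystem.IsReduced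
      rw [hπtake, h, hlu, List.length_take, min_eq_left (by omega)]
    · omega
  have hinv : cs.IsRightInversion (π (ω.take k)) (s i) := ⟨cs.isReflection_simple i, hlt⟩
  have hmem : s i ∈ ris (ω.take k) := mem_ris_of_isRightInversion cs hred rfl hinv
  obtain ⟨j, hj, hjs⟩ := List.mem_iff_getElem.mp hmem
  have hjk : j < k := by
    rw [cs.length_rightInvSeq, List.length_take] at hj
    omega
  have herase : π (ω.take k) * s i = π ((ω.take k).eraseIdx j) := by
    rw [← cs.wordProd_mul_getD_rightInvSeq (ω.take k) j]
    congr 1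
    rw [List.getD_eq_getElem _ _ hj, hjs]
  refine ⟨(ω.take k).eraseIdx j ++ ω.drop (k+1), ?_, ?_, ?_⟩
  · rw [List.length_append]
    have h1 : j < (ω.take k).length := by rw [List.length_take]; omega
    have h2 := List.length_eraseIdx_add_one h1
    rw [List.length_take] at h2
    rw [List.length_drop]
    omega
  · rw [cs.wordProd_append, ← herase, ← hπtake, ← cs.wordProd_append,
      List.take_append_drop]
  · intro i' hi'
    rcases List.mem_append.mp hi' with h | h
    · exact List.take_subset k ω ((List.eraseIdx_sublist _ j).mem h)
    · exact List.drop_subset _ ω h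

theorem exists_reduced_word_subset (ω : List B) :
    ∃ ω' : List B, cs.IsReduced ω' ∧ π ω' = π ω ∧ ∀ i ∈ ω', i ∈ ω := by
  suffices H : ∀ n (ω : List B), ω.length ≤ n →
      ∃ ω' : List B, cs.IsReduced ω' ∧ π ω' = π ω ∧ ∀ i ∈ ω', i ∈ ω from
    H ω.length ω le_rfl
  intro n
  induction n with
  | zero =>
    intro ω hlen
    have : ω = [] := List.length_eq_zero_iff.mp (by omega)
    subst this
    exact ⟨[], by simp [CoxeterSystem.IsReduced], rfl, by simp⟩
  | succ n ih =>
    intro ω hlen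
    by_cases h : cs.IsReduced ω
    · exact ⟨ω, h, rfl, fun _ h => h⟩
    · obtain ⟨ω', hlen', hπ, hsub⟩ := deletion cs ω h
      obtain ⟨ω'', h1, h2, h3⟩ := ih ω' (by omega)
      exact ⟨ω'', h1, h2.trans hπ, fun i hi => hsub i (h3 i hi)⟩

section Parabolic

variable (J : Set B)

theorem wordProd_mem {ω : List B} (hω : ∀ i ∈ ω, i ∈ J) :
    π ω ∈ Subgroup.closure (cs.simple '' J) := by
  induction ω with
  | nil => rw [cs.wordProd_nil]; exact one_mem _
  | cons i ω ih =>
    rw [cs.wordProd_cons]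
    exact mul_mem (Subgroup.subset_closure ⟨i, hω i mem_cons_self, rfl⟩)
      (ih fun i' h => hω i' (mem_cons_of_mem _ h))

theorem exists_word_J {z : W} (hz : z ∈ Subgroup.closure (cs.simple '' J)) :
    ∃ ω : List B, (∀ i ∈ ω, i ∈ J) ∧ π ω = z := by
  induction hz using Subgroup.closure_induction with
  | mem x hx =>
    obtain ⟨i, hi, rfl⟩ := hx
    exact ⟨[i], by simpa using hi, by simp⟩
  | one => exact ⟨[], by simp, by simp⟩
  | mul x y hx hy ihx ihy =>
    obtain ⟨ω₁, h1, rfl⟩ := ihx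
    obtain ⟨ω₂, h2, rfl⟩ := ihy
    refine ⟨ω₁ ++ ω₂, ?_, by rw [cs.wordProd_append]⟩
    intro i hi
    rcases mem_append.mp hi with h | h
    · exact h1 i h
    · exact h2 i h
  | inv x hx ihx =>
    obtain ⟨ω, h, rfl⟩ := ihx
    exact ⟨ω.reverse, fun i hi => h i (mem_reverse.mp hi), cs.wordProd_reverse ω⟩

theorem exists_reduced_word_J {z : W} (hz : z ∈ Subgroup.closure (cs.simple '' J)) :
    ∃ ω : List B, (∀ i ∈ ω, i ∈ J) ∧ cs.IsReduced ω ∧ π ω = z := by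
  obtain ⟨ω, hω, hπ⟩ := exists_word_J cs J hz
  obtain ⟨ω', hred, hπ', hsub⟩ := exists_reduced_word_subset cs ω
  exact ⟨ω', fun i hi => hω i (hsub i hi), hred, hπ'.trans hπ⟩

theorem mem_of_mem_ris {ω : List B} (hω : ∀ i ∈ ω, i ∈ J) {t : W} (ht : t ∈ ris ω) :
    t ∈ Subgroup.closure (cs.simple '' J) := by
  induction ω with
  | nil => simp at ht
  | cons i ω ih =>
    rw [rightInvSeq_cons] at ht
    rcases List.mem_cons.mp ht with rfl | h
    · have hπω : π ω ∈ Subgroup.closure (cs.simple '' J) :=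
        wordProd_mem cs J (fun i' h => hω i' (mem_cons_of_mem _ h))
      exact mul_mem (mul_mem (inv_mem hπω)
        (Subgroup.subset_closure ⟨i, hω i mem_cons_self, rfl⟩)) hπω
    · exact ih (fun i' h' => hω i' (mem_cons_of_mem _ h')) h

theorem inversion_mem {u t : W} (hu : u ∈ Subgroup.closure (cs.simple '' J))
    (hinv : cs.IsRightInversion u t) : t ∈ Subgroup.closure (cs.simple '' J) := by
  obtain ⟨ω, hω, hred, hπ⟩ := exists_reduced_word_J cs J hu
  exact mem_of_mem_ris cs J hω (mem_ris_of_isRightInversion cs hred hπ hinv)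

end Parabolic

theorem exists_inversion_finset (w : W) :
    ∃ F : Finset W, (∀ t, t ∈ F ↔ cs.IsRightInversion w t) ∧ F.card = ℓ w := by
  obtain ⟨ω, hred, hπ⟩ := cs.exists_reduced_word' w
  refine ⟨(ris ω).toFinset, ?_, ?_⟩
  · intro t
    rw [List.mem_toFinset]
    constructor
    · intro h
      have := cs.isRightInversion_of_mem_rightInvSeq hred h
      rwa [← hπ] at this
    · exact fun h => mem_ris_of_isRightInversion cs hred hπ.symm h
  · rw [List.toFinset_card_of_nodup hred.nodup_rightInvSeq, cs.length_rightInvSeq, ← hred, hπ]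

theorem isRightInversion_mul_iff {a b t : W} (ht : cs.IsReflection t) :
    cs.IsRightInversion (a * b) t ↔
      (cs.IsRightInversion b t ↔ ¬ cs.IsRightInversion a (b * t * b⁻¹)) := by
  obtain ⟨ωa, hπa⟩ := cs.wordProd_surjective a
  obtain ⟨ωb, hπb⟩ := cs.wordProd_surjective b
  have hπab : π (ωa ++ ωb) = a * b := by rw [cs.wordProd_append, hπa, hπb]
  rw [isRightInversion_iff_odd_count cs ht hπab,
    isRightInversion_iff_odd_count cs ht hπb,
    isRightInversion_iff_odd_count cs (ht.conj b) hπa,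
    ris_append, count_append]
  have hf : Function.Injective (fun x : W => (π ωb)⁻¹ * x * π ωb) := by
    intro x y hxy; simpa using hxy
  have h4 := List.count_map_of_injective (ris ωa) (fun x : W => (π ωb)⁻¹ * x * π ωb) hf
    (b * t * b⁻¹)
  have hft : (π ωb)⁻¹ * (b * t * b⁻¹) * π ωb = t := by rw [hπb]; group
  simp only [hft] at h4
  rw [h4, Nat.odd_add, ← Nat.not_odd_iff_even]
  tauto

theorem longest_mul (J : Set B) {m u : W}
    (hm : m ∈ Subgroup.closure (cs.simple '' J))
    (hmax : ∀ v ∈ Subgroup.closure (cs.simple '' J), ℓ v ≤ ℓ m)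
    (hu : u ∈ Subgroup.closure (cs.simple '' J)) :
    ℓ (m * u) + ℓ u = ℓ m := by
  obtain ⟨Fm, hFm, hFmcard⟩ := exists_inversion_finset cs m
  obtain ⟨Fu, hFu, hFucard⟩ := exists_inversion_finset cs u
  obtain ⟨Fmu, hFmu, hFmucard⟩ := exists_inversion_finset cs (m * u)
  have hFm_iff : ∀ t, t ∈ Fm ↔
      (cs.IsReflection t ∧ t ∈ Subgroup.closure (cs.simple '' J)) := by
    intro t
    rw [hFm]
    constructor
    · exact fun h => ⟨h.1, inversion_mem cs J hm h⟩
    · rintro ⟨htr, htH⟩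
      refine ⟨htr, ?_⟩
      have h1 : ℓ (m * t) ≤ ℓ m := hmax _ (mul_mem hm htH)
      have h2 : ℓ (m * t) ≠ ℓ m := htr.length_mul_left_ne m
      omega
  have hsub : Fu ⊆ Fm := by
    intro t htu
    rw [hFu] at htu
    exact (hFm_iff t).2 ⟨htu.1, inversion_mem cs J hu htu⟩
  have hconj_iff : ∀ t, cs.IsReflection t →
      (cs.IsRightInversion m (u * t * u⁻¹) ↔ t ∈ Subgroup.closure (cs.simple '' J)) := by
    intro t htr
    constructor
    · intro h
      have h1 : u * t * u⁻¹ ∈ Subgroup.closure (cs.simple '' J) := inversion_mem cs J hm h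
      have h2 : t = u⁻¹ * (u * t * u⁻¹) * u := by group
      rw [h2]
      exact mul_mem (mul_mem (inv_mem hu) h1) hu
    · intro h
      have h1 : u * t * u⁻¹ ∈ Subgroup.closure (cs.simple '' J) :=
        mul_mem (mul_mem hu h) (inv_mem hu)
      have := (hFm_iff (u * t * u⁻¹)).2 ⟨htr.conj u, h1⟩
      rwa [hFm] at this
  have hmu_iff : ∀ t, t ∈ Fmu ↔ (t ∈ Fm ∧ t ∉ Fu) := by
    intro t
    rw [hFmu, hFu]
    constructor
    · intro h
      have htr := h.1
      have hx := (isRightInversion_mul_iff cs htr).1 h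
      have hnu : ¬ cs.IsRightInversion u t := by
        intro hin
        exact (hx.1 hin) ((hconj_iff t htr).2 (inversion_mem cs J hu hin))
      have hmc : cs.IsRightInversion m (u * t * u⁻¹) := by
        by_contra hc
        exact hnu (hx.2 hc)
      exact ⟨(hFm_iff t).2 ⟨htr, (hconj_iff t htr).1 hmc⟩, hnu⟩
    · rintro ⟨htm, hnu⟩
      have htr := ((hFm_iff t).1 htm).1
      have htH := ((hFm_iff t).1 htm).2
      refine (isRightInversion_mul_iff cs htr).2 ?_
      constructor
      · intro h; exact absurd h hnu
      · intro h; exact absurd ((hconj_iff t htr).2 htH) h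
  have hset : Fmu = Fm \ Fu := by
    ext t
    rw [hmu_iff, Finset.mem_sdiff]
  have hcard : Fmu.card = Fm.card - Fu.card := by rw [hset, Finset.card_sdiff_of_subset hsub]
  have hle : Fu.card ≤ Fm.card := Finset.card_le_card hsub
  omega

end CoxExchange

/-- Let `(W,S)` be a Coxeter system, `J ⊆ S`, `W_J` the standard parabolic
subgroup generated by `J` (assumed finite) with longest element `w_J`.  For `w ∈ W` with
`ℓ(w w_J) = ℓ(w) + ℓ(w_J)`: if `α` is a positive root such that `w_J w⁻¹ (α)` is positive,
then `y w⁻¹ (α)` is positive for every `y ∈ W_J`.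

Positive roots correspond to reflections `t`, and for `v ∈ W` the root `v(α_t)` is positive
iff `t` is not a right inversion of `v`; we state positivity in these terms. -/
theorem parabolic_preserves_positivity {B W : Type*} [Group W] {M : CoxeterMatrix B}
    (cs : CoxeterSystem M W) (J : Set B)
    (hfin : (Subgroup.closure (cs.simple '' J) : Set W).Finite)
    (wJ : W) (hwJmem : wJ ∈ Subgroup.closure (cs.simple '' J))
    (hwJlong : ∀ u ∈ Subgroup.closure (cs.simple '' J), cs.length u ≤ cs.length wJ)
    (w : W) (hw : cs.length (w * wJ) = cs.length w + cs.length wJ)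
    (t : W) (ht : cs.IsReflection t)
    (hpos : ¬ cs.IsRightInversion (wJ * w⁻¹) t) :
    ∀ y ∈ Subgroup.closure (cs.simple '' J), ¬ cs.IsRightInversion (y * w⁻¹) t := by
  intro y hy hinv
  have hwJinv_mem : wJ⁻¹ ∈ Subgroup.closure (cs.simple '' J) := inv_mem hwJmem
  have hlwJinv : cs.length wJ⁻¹ = cs.length wJ := cs.length_inv wJ
  have hmaxinv : ∀ v ∈ Subgroup.closure (cs.simple '' J), cs.length v ≤ cs.length wJ⁻¹ :=
    fun v hv => hlwJinv ▸ hwJlong v hv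
  have hA : ∀ u ∈ Subgroup.closure (cs.simple '' J),
      cs.length (w * u) = cs.length w + cs.length u := by
    intro u hu
    have hL := CoxExchange.longest_mul cs J hwJinv_mem hmaxinv hu
    have heq : cs.length (u⁻¹ * wJ) = cs.length (wJ⁻¹ * u) := by
      rw [← cs.length_inv]
      congr 1
      group
    have htri1 : cs.length (w * wJ) ≤ cs.length (w * u) + cs.length (u⁻¹ * wJ) := by
      have := cs.length_mul_le (w * u) (u⁻¹ * wJ)
      rwa [show (w * u) * (u⁻¹ * wJ) = w * wJ by group] at this
    have htri2 : cs.length (w * u) ≤ cs.length w + cs.length u := cs.length_mul_le w u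
    omega
  obtain ⟨htr, hlen⟩ := hinv
  have h_yw : cs.length (y * w⁻¹) = cs.length w + cs.length y := by
    rw [show y * w⁻¹ = (w * y⁻¹)⁻¹ by group, cs.length_inv, hA y⁻¹ (inv_mem hy), cs.length_inv]
  have h_wJw : cs.length (wJ * w⁻¹) = cs.length w + cs.length wJ := by
    rw [show wJ * w⁻¹ = (w * wJ⁻¹)⁻¹ by group, cs.length_inv, hA wJ⁻¹ hwJinv_mem, cs.length_inv]
  have h_wJy : cs.length (wJ * y⁻¹) + cs.length y = cs.length wJ := by
    have := CoxExchange.longest_mul cs J hwJmem hwJlong (inv_mem hy)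
    rwa [cs.length_inv] at this
  have htri : cs.length (wJ * w⁻¹ * t) ≤ cs.length (wJ * y⁻¹) + cs.length (y * w⁻¹ * t) := by
    have := cs.length_mul_le (wJ * y⁻¹) (y * w⁻¹ * t)
    rwa [show (wJ * y⁻¹) * (y * w⁻¹ * t) = wJ * w⁻¹ * t by group] at this
  exact hpos ⟨ht, by omega⟩
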